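/- Let γ > 1, p(v) = v^{-γ}. Fix v* > 0. Then there exist constants C > 0 and δ* > 0 such that for any 0 < δ < δ* and any v, w > 0 with |v - w| < δ and w in a fixed compact neighborhood of v*, one has p(v|w) ≤ ((γ+1)/(2γ p(w)) + C|p(v)-p(w)|)·|p(v)-p(w)|². -/

import Mathlib

/-- Pressure `p(v) = v^(-γ)`. -/
noncomputable def pres (γ v : ℝ) : ℝ := v ^ (-γ)

/-- Relative pressure `p(v|w) = p(v) - p(w) - p'(w)(v-w)` with `p'(w) = -γ w^(-γ-1)`. -/
noncomputable def relPres (γ v w : ℝ) : ℝ :=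
  pres γ v - pres γ w - (-γ * w ^ (-γ - 1)) * (v - w)

lemma hasDerivAt_one_add_rpow (c : ℝ) {x : ℝ} (hx : 0 < 1 + x) :
    HasDerivAt (fun y : ℝ => (1 + y) ^ c) (c * (1 + x) ^ (c - 1)) x := by
  have h := (Real.hasDerivAt_rpow_const (x := 1 + x) (p := c) (Or.inl hx.ne')).comp x
    ((hasDerivAt_id x).const_add 1)
  simpa [Function.comp_def] using h

lemma bernoulli2_neg (β : ℝ) (hβ : 0 < β) (hβ1 : β ≤ 1) {x : ℝ}
    (hxl : -(1/2) ≤ x) (hxu : x ≤ 0) :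
    (1 + x) ^ (-β) ≤ 1 - β * x + β * (β + 1) / 2 * x ^ 2 - 8 * x ^ 3 := by
  set G : ℝ → ℝ := fun y => 1 - β * y + β * (β + 1) / 2 * y ^ 2 - 8 * y ^ 3 - (1 + y) ^ (-β)
    with hG
  set G1 : ℝ → ℝ := fun y => -β + β * (β + 1) * y - 24 * y ^ 2 + β * (1 + y) ^ (-β - 1) with hG1
  set s : Set ℝ := Set.Icc (-(1/2) : ℝ) 0 with hs
  have hpos : ∀ y : ℝ, y ∈ s → 0 < 1 + y := by
    intro y hy; rw [hs, Set.mem_Icc] at hy; linarith [hy.1]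
  have hDG : ∀ y : ℝ, 0 < 1 + y → HasDerivAt G (G1 y) y := by
    intro y hy
    have h1 : HasDerivAt (fun z : ℝ => β * z) β y := by
      simpa using (hasDerivAt_id y).const_mul β
    have h2 : HasDerivAt (fun z : ℝ => z ^ 2) (2 * y) y := by
      simpa using hasDerivAt_pow 2 y
    have h4 : HasDerivAt (fun z : ℝ => z ^ 3) (3 * y ^ 2) y := by
      simpa using hasDerivAt_pow 3 y
    have h3 := hasDerivAt_one_add_rpow (-β) hy
    have := ((((hasDerivAt_const y (1:ℝ)).sub h1).add
      (h2.const_mul (β * (β + 1) / 2))).sub (h4.const_mul 8)).sub h3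
    refine this.congr_deriv ?_
    simp only [hG1]; ring_nf
  have hDG1 : ∀ y : ℝ, 0 < 1 + y →
      HasDerivAt G1 (β * (β + 1) - 48 * y - β * (β + 1) * (1 + y) ^ (-β - 2)) y := by
    intro y hy
    have h1 : HasDerivAt (fun z : ℝ => β * (β + 1) * z) (β * (β + 1)) y := by
      simpa using (hasDerivAt_id y).const_mul (β * (β + 1))
    have h2 : HasDerivAt (fun z : ℝ => z ^ 2) (2 * y) y := by
      simpa using hasDerivAt_pow 2 y
    have h3 := (hasDerivAt_one_add_rpow (-β - 1) hy).const_mul β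
    have := (((hasDerivAt_const y (-β)).add h1).sub (h2.const_mul 24)).add h3
    refine this.congr_deriv ?_
    ring_nf
  -- second derivative nonneg on s
  have hG2nn : ∀ y : ℝ, y ∈ s → 0 ≤ β * (β + 1) - 48 * y - β * (β + 1) * (1 + y) ^ (-β - 2) := by
    intro y hy
    rw [hs, Set.mem_Icc] at hy
    have h1y : (1:ℝ)/2 ≤ 1 + y := by linarith [hy.1]
    have h1y' : 0 < 1 + y := by linarith
    have h1y1 : 1 + y ≤ 1 := by linarith [hy.2]
    have hle : (1 + y) ^ (-β - 2) ≤ (1 + y) ^ (-3 : ℝ) :=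
      Real.rpow_le_rpow_of_exponent_ge h1y' h1y1 (by linarith)
    have h3 : (1 + y) ^ (-3 : ℝ) = ((1 + y) ^ (3:ℕ))⁻¹ := by
      rw [show (-3 : ℝ) = -(3:ℕ) by norm_num, Real.rpow_neg h1y'.le, Real.rpow_natCast]
    rw [h3] at hle
    have hmul : ((1 + y) ^ (3:ℕ))⁻¹ * (1 + y) ^ (3:ℕ) = 1 := inv_mul_cancel₀ (by positivity)
    have ht : ((1 + y) ^ (3:ℕ))⁻¹ ≤ 8 := by
      rw [inv_le_comm₀ (by positivity) (by norm_num)]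
      nlinarith [hy.1, hy.2, sq_nonneg (1 + y),
        mul_nonneg (show (0:ℝ) ≤ y + 1/2 by linarith [hy.1]) (sq_nonneg (1 + y))]
    have hfact : (0:ℝ) ≤ 1 - (1 + y) ^ (3:ℕ) := by
      nlinarith [mul_nonneg (show (0:ℝ) ≤ -y by linarith [hy.2]) (sq_nonneg (1 + y)),
        mul_nonneg (show (0:ℝ) ≤ -y by linarith [hy.2]) (show (0:ℝ) ≤ 1 + y by linarith)]
    have hc : ((1 + y) ^ (3:ℕ))⁻¹ - 1 ≤ -(24 : ℝ) * y := by
      nlinarith [mul_nonneg (sub_nonneg.2 ht) hfact, hmul,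
        mul_nonneg (sq_nonneg y) (show (0:ℝ) ≤ 3 + y by linarith [hy.1])]
    have hββ : β * (β + 1) ≤ 2 := by nlinarith
    have hββ0 : 0 ≤ β * (β + 1) := by positivity
    have hrnn : (0:ℝ) ≤ (1 + y) ^ (-β - 2) := Real.rpow_nonneg h1y'.le _
    nlinarith [mul_le_mul_of_nonneg_left hle hββ0, hy.2,
      mul_nonneg hββ0 (show (0:ℝ) ≤ -y by linarith [hy.2])]
  -- G1 is monotone on s, hence ≤ G1 0 = 0
  have hG1mono : MonotoneOn G1 s := by
    apply monotoneOn_of_deriv_nonneg (convex_Icc _ _)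
    · exact fun y hy => ((hDG1 y (hpos y hy)).continuousAt).continuousWithinAt
    · intro y hy
      have hy' : y ∈ s := interior_subset hy
      exact ((hDG1 y (hpos y hy')).differentiableAt).differentiableWithinAt
    · intro y hy
      have hy' : y ∈ s := interior_subset hy
      rw [(hDG1 y (hpos y hy')).deriv]
      exact hG2nn y hy'
  have h0s : (0:ℝ) ∈ s := by rw [hs]; constructor <;> norm_num
  have hG10 : G1 0 = 0 := by simp [hG1, Real.one_rpow]
  have hG1np : ∀ y : ℝ, y ∈ s → G1 y ≤ 0 := by
    intro y hy
    have := hG1mono hy h0s (by rw [hs, Set.mem_Icc] at hy; exact hy.2)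
    rw [hG10] at this; exact this
  have hGanti : AntitoneOn G s := by
    apply antitoneOn_of_deriv_nonpos (convex_Icc _ _)
    · exact fun y hy => ((hDG y (hpos y hy)).continuousAt).continuousWithinAt
    · intro y hy
      have hy' : y ∈ s := interior_subset hy
      exact ((hDG y (hpos y hy')).differentiableAt).differentiableWithinAt
    · intro y hy
      have hy' : y ∈ s := interior_subset hy
      rw [(hDG y (hpos y hy')).deriv]
      exact hG1np y hy'
  have hG0 : G 0 = 0 := by simp [hG, Real.one_rpow]
  have hxs : x ∈ s := by rw [hs, Set.mem_Icc]; exact ⟨hxl, hxu⟩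
  have := hGanti hxs h0s hxu
  rw [hG0] at this
  simp only [hG] at this
  linarith

lemma bernoulli2_pos (β : ℝ) (hβ : 0 < β) {x : ℝ} (hx : 0 ≤ x) :
    (1 + x) ^ (-β) ≤ 1 - β * x + β * (β + 1) / 2 * x ^ 2 := by
  set g : ℝ → ℝ := fun y => 1 - β * y + β * (β + 1) / 2 * y ^ 2 - (1 + y) ^ (-β) with hg
  set g1 : ℝ → ℝ := fun y => -β + β * (β + 1) * y + β * (1 + y) ^ (-β - 1) with hg1
  have hDg : ∀ y : ℝ, 0 < 1 + y → HasDerivAt g (g1 y) y := by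
    intro y hy
    have h1 : HasDerivAt (fun z : ℝ => β * z) β y := by
      simpa using (hasDerivAt_id y).const_mul β
    have h2 : HasDerivAt (fun z : ℝ => z ^ 2) (2 * y) y := by
      simpa using hasDerivAt_pow 2 y
    have h3 := hasDerivAt_one_add_rpow (-β) hy
    have := (((hasDerivAt_const y (1:ℝ)).sub h1).add (h2.const_mul (β * (β + 1) / 2))).sub h3
    refine this.congr_deriv ?_
    simp only [hg1]; ring_nf
  have hDg1 : ∀ y : ℝ, 0 < 1 + y →
      HasDerivAt g1 (β * (β + 1) - β * (β + 1) * (1 + y) ^ (-β - 2)) y := by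
    intro y hy
    have h1 : HasDerivAt (fun z : ℝ => β * (β + 1) * z) (β * (β + 1)) y := by
      simpa using (hasDerivAt_id y).const_mul (β * (β + 1))
    have h3 := (hasDerivAt_one_add_rpow (-β - 1) hy).const_mul β
    have := ((hasDerivAt_const y (-β)).add h1).add h3
    refine this.congr_deriv ?_
    ring_nf
  have hpos : ∀ y : ℝ, y ∈ Set.Ici (0:ℝ) → 0 < 1 + y := fun y hy => by
    simp only [Set.mem_Ici] at hy; linarith
  have hg1mono : MonotoneOn g1 (Set.Ici (0:ℝ)) := by
    apply monotoneOn_of_deriv_nonneg (convex_Ici 0)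
    · exact fun y hy => ((hDg1 y (hpos y hy)).continuousAt).continuousWithinAt
    · intro y hy
      rw [interior_Ici] at hy
      exact ((hDg1 y (hpos y (Set.mem_Ici.2 (le_of_lt hy)))).differentiableAt).differentiableWithinAt
    · intro y hy
      rw [interior_Ici] at hy
      have h1y : 0 < 1 + y := by simp only [Set.mem_Ioi] at hy; linarith
      rw [(hDg1 y h1y).deriv]
      have : (1 + y : ℝ) ^ (-β - 2) ≤ 1 :=
        Real.rpow_le_one_of_one_le_of_nonpos (by simp only [Set.mem_Ioi] at hy; linarith)
          (by linarith)
      nlinarith [mul_pos hβ (show (0:ℝ) < β + 1 by linarith)]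
  have hg10 : g1 0 = 0 := by simp [hg1, Real.one_rpow]
  have hg1nn : ∀ y : ℝ, y ∈ Set.Ici (0:ℝ) → 0 ≤ g1 y := by
    intro y hy
    have := hg1mono (Set.self_mem_Ici) hy (Set.mem_Ici.1 hy)
    rw [hg10] at this; exact this
  have hgmono : MonotoneOn g (Set.Ici (0:ℝ)) := by
    apply monotoneOn_of_deriv_nonneg (convex_Ici 0)
    · exact fun y hy => ((hDg y (hpos y hy)).continuousAt).continuousWithinAt
    · intro y hy
      rw [interior_Ici] at hy
      exact ((hDg y (hpos y (Set.mem_Ici.2 (le_of_lt hy)))).differentiableAt).differentiableWithinAt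
    · intro y hy
      rw [interior_Ici] at hy
      have h1y : 0 < 1 + y := by simp only [Set.mem_Ioi] at hy; linarith
      rw [(hDg y h1y).deriv]
      exact hg1nn y (Set.mem_Ici.2 (le_of_lt hy))
  have hg0 : g 0 = 0 := by simp [hg, Real.one_rpow]
  have := hgmono (Set.self_mem_Ici) (Set.mem_Ici.2 hx) hx
  rw [hg0] at this
  simp only [hg] at this
  linarith


lemma bernoulli2 (β : ℝ) (hβ : 0 < β) (hβ1 : β ≤ 1) {x : ℝ} (hx : |x| ≤ 1/2) :
    (1 + x) ^ (-β) ≤ 1 - β * x + β * (β + 1) / 2 * x ^ 2 + 8 * |x| ^ 3 := by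
  rcases le_or_gt 0 x with h | h
  · have h1 := bernoulli2_pos β hβ h
    have h8 : (0:ℝ) ≤ 8 * |x| ^ 3 := by positivity
    linarith
  · rw [abs_of_neg h] at hx ⊢
    have h1 := bernoulli2_neg β hβ hβ1 (by linarith) h.le
    have h2 : (-x : ℝ) ^ 3 = -(x ^ 3) := by ring
    linarith

/-- Sharp upper bound of the relative pressure in terms of the pressure difference,
for `w` in a fixed compact neighborhood `[a,b]` of `v*` and `v` close to `w`. -/
theorem relative_pressure_upper_bound (γ vs a b : ℝ) (hγ : 1 < γ) (hvs : 0 < vs)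
    (ha : 0 < a) (hav : a ≤ vs) (hvb : vs ≤ b) :
    ∃ C > 0, ∃ δstar > 0, ∀ δ : ℝ, 0 < δ → δ < δstar →
      ∀ v w : ℝ, 0 < v → 0 < w → |v - w| < δ → w ∈ Set.Icc a b →
        relPres γ v w ≤ ((γ + 1) / (2 * γ * pres γ w) + C * |pres γ v - pres γ w|) *
          |pres γ v - pres γ w| ^ 2 := by
  have hγ0 : (0:ℝ) < γ := by linarith
  have hb : (0:ℝ) < b := lt_of_lt_of_le hvs hvb
  set β : ℝ := γ⁻¹ with hβdef
  have hβ0 : 0 < β := inv_pos.2 hγ0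
  have hβ1 : β ≤ 1 := by
    rw [hβdef, inv_le_one_iff₀]; right; linarith
  have hβγ : γ * β = 1 := mul_inv_cancel₀ hγ0.ne'
  set η : ℝ := min (1 - (2/3 : ℝ) ^ β) ((2:ℝ) ^ β - 1) with hηdef
  have h23 : (2/3 : ℝ) ^ β < 1 := Real.rpow_lt_one (by norm_num) (by norm_num) hβ0
  have h2b : (1:ℝ) < (2:ℝ) ^ β :=
    (Real.one_lt_rpow_iff_of_pos (by norm_num)).2 (Or.inl ⟨by norm_num, hβ0⟩)
  have hη : 0 < η := lt_min (by linarith) (by linarith)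
  have hη1 : η ≤ 1 - (2/3 : ℝ) ^ β := by rw [hηdef]; exact min_le_left _ _
  have hη2 : η ≤ (2:ℝ) ^ β - 1 := by rw [hηdef]; exact min_le_right _ _
  refine ⟨8 * γ * b ^ (2 * γ), by positivity, a * η, by positivity, ?_⟩
  intro δ hδ0 hδs v w hv hw hvw hwab
  obtain ⟨haw, hwb⟩ := hwab
  set s : ℝ := v / w with hsdef
  have hs : 0 < s := div_pos hv hw
  set P : ℝ := w ^ (-γ) with hPdef
  have hP : 0 < P := Real.rpow_pos_of_pos hw _
  set x : ℝ := v ^ (-γ) / P - 1 with hxdef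
  have hsx : 1 + x = s ^ (-γ) := by
    rw [hxdef, hsdef, hPdef, Real.div_rpow hv.le hw.le]; field_simp; ring
  -- bound on s
  have hs1 : |s - 1| < η := by
    have h0 : s - 1 = (v - w) / w := by rw [hsdef]; field_simp
    rw [h0, abs_div, abs_of_pos hw, div_lt_iff₀ hw]
    have h1 : a * η ≤ η * w := by nlinarith
    linarith
  have hslo : (2/3 : ℝ) ^ β ≤ s := by
    have h := abs_lt.1 hs1
    linarith [h.1]
  have hshi : s ≤ (2:ℝ) ^ β := by
    have h := abs_lt.1 hs1
    linarith [h.2]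
  -- bound on x
  have hxge : -(1/2) ≤ x := by
    have h1 : ((2:ℝ) ^ β) ^ (-γ) ≤ s ^ (-γ) :=
      Real.rpow_le_rpow_of_nonpos hs hshi (by linarith)
    have h2 : ((2:ℝ) ^ β) ^ (-γ) = 1/2 := by
      rw [← Real.rpow_mul (by norm_num : (0:ℝ) ≤ 2),
        show β * (-γ) = -1 by rw [hβdef]; field_simp, Real.rpow_neg_one]
      norm_num
    rw [h2, ← hsx] at h1; linarith
  have hxle : x ≤ 1/2 := by
    have h0 : (0:ℝ) < (2/3:ℝ) ^ β := Real.rpow_pos_of_pos (by norm_num) _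
    have h1 : s ^ (-γ) ≤ ((2/3:ℝ) ^ β) ^ (-γ) :=
      Real.rpow_le_rpow_of_nonpos h0 hslo (by linarith)
    have h2 : ((2/3:ℝ) ^ β) ^ (-γ) = 3/2 := by
      rw [← Real.rpow_mul (by norm_num : (0:ℝ) ≤ 2/3),
        show β * (-γ) = -1 by rw [hβdef]; field_simp, Real.rpow_neg_one]
      norm_num
    rw [h2, ← hsx] at h1; linarith
  have hxabs : |x| ≤ 1/2 := abs_le.2 ⟨by linarith, hxle⟩
  -- key inequality for s
  have hkey : s ≤ 1 - β * x + β * (β + 1) / 2 * x ^ 2 + 8 * |x| ^ 3 := by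
    have h := bernoulli2 β hβ0 hβ1 hxabs
    have hrw : (1 + x) ^ (-β) = s := by
      rw [hsx, ← Real.rpow_mul hs.le,
        show (-γ) * (-β) = 1 by linear_combination hβγ, Real.rpow_one]
    rwa [hrw] at h
  -- rewrite relPres
  have hvP : v ^ (-γ) = P * (1 + x) := by
    rw [hxdef]; field_simp; ring
  have hrel : relPres γ v w = P * x + γ * P * (s - 1) := by
    simp only [relPres, pres]
    rw [hvP, ← hPdef]
    have hw1 : w ^ (-γ - 1) = P / w := by
      rw [hPdef, show -γ - 1 = -γ + (-1) by ring, Real.rpow_add hw, Real.rpow_neg_one,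
        div_eq_mul_inv]
    have hvws : v - w = w * (s - 1) := by rw [hsdef]; field_simp
    rw [hw1, hvws]
    field_simp
    ring
  -- final bound
  have hPb : b ^ (-γ) ≤ P := Real.rpow_le_rpow_of_nonpos hw hwb (by linarith)
  have hCP : 8 * γ ≤ (8 * γ * b ^ (2 * γ)) * P ^ 2 := by
    have h1 : (b ^ (-γ)) ^ 2 ≤ P ^ 2 :=
      pow_le_pow_left₀ (Real.rpow_nonneg hb.le _) hPb 2
    have h2 : b ^ (2*γ) * (b ^ (-γ)) ^ 2 = 1 := by
      rw [sq, ← Real.rpow_add hb, ← Real.rpow_add hb,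
        show 2*γ + (-γ + -γ) = 0 by ring, Real.rpow_zero]
    calc 8 * γ = 8 * γ * (b ^ (2*γ) * (b ^ (-γ)) ^ 2) := by rw [h2]; ring
      _ ≤ 8 * γ * (b ^ (2*γ) * P ^ 2) := by
          apply mul_le_mul_of_nonneg_left _ (by positivity)
          exact mul_le_mul_of_nonneg_left h1 (Real.rpow_nonneg hb.le _)
      _ = (8 * γ * b ^ (2 * γ)) * P ^ 2 := by ring
  rw [hrel]
  simp only [pres]
  rw [hvP, ← hPdef, show P * (1 + x) - P = P * x by ring, abs_mul, abs_of_pos hP]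
  have hsplit : ((γ + 1) / (2 * γ * P) + 8 * γ * b ^ (2*γ) * (P * |x|)) * (P * |x|) ^ 2
      = (γ + 1) / (2 * γ) * P * x ^ 2 + (8 * γ * b ^ (2*γ)) * P ^ 3 * (x ^ 2 * |x|) := by
    have hx3 : |x| ^ 3 = x ^ 2 * |x| := by rw [pow_succ, sq_abs]
    rw [mul_pow, sq_abs]
    field_simp
  rw [hsplit]
  have hstep : P * x + γ * P * (s - 1) ≤
      (γ + 1) / (2 * γ) * P * x ^ 2 + 8 * γ * (P * (x ^ 2 * |x|)) := by
    have h2 : γ * P * (s - 1) ≤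
        γ * P * (-(β * x) + β * (β + 1) / 2 * x ^ 2 + 8 * |x| ^ 3) := by
      apply mul_le_mul_of_nonneg_left (by linarith [hkey]) (by positivity)
    have hfrac : (γ + 1) / (2 * γ) = (β + 1) / 2 := by
      rw [hβdef]; field_simp; ring
    have hid : P * x + γ * P * (-(β * x) + β * (β + 1) / 2 * x ^ 2 + 8 * |x| ^ 3)
        = (γ + 1) / (2 * γ) * P * x ^ 2 + 8 * γ * (P * (x ^ 2 * |x|)) := by
      rw [hfrac, show |x| ^ 3 = x ^ 2 * |x| from by rw [pow_succ, sq_abs]]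
      linear_combination ((β + 1) / 2 * P * x ^ 2 - P * x) * hβγ
    linarith
  have hlast : 8 * γ * (P * (x ^ 2 * |x|)) ≤ (8 * γ * b ^ (2*γ)) * P ^ 3 * (x ^ 2 * |x|) := by
    have hnn : 0 ≤ P * (x ^ 2 * |x|) := by positivity
    calc 8 * γ * (P * (x ^ 2 * |x|)) ≤ ((8 * γ * b ^ (2*γ)) * P ^ 2) * (P * (x ^ 2 * |x|)) :=
          mul_le_mul_of_nonneg_right hCP hnn
      _ = (8 * γ * b ^ (2*γ)) * P ^ 3 * (x ^ 2 * |x|) := by ring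
  exact hstep.trans (add_le_add le_rfl hlast)
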